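/- For every 0 ≤ j ≤ K and every 1 ≤ i ≤ n, g̃_{i;j} = (g_{i;j}, 0) ∈ ℤ^{2n}: the first n entries of the extended g-vector g̃_{i;j} form the g-vector g_{i;j} of the n-dimensional G-pattern, and its last n entries are zero. -/

import Mathlib

open Matrix

/-- For a generalized cluster pattern with principal coefficients
(`m = 2n`, `B̃_0 = [B_0; I_n]`), for every `0 ≤ j ≤ K` and `1 ≤ i ≤ n` the extended
`g`-vector satisfies `g̃_{i;j} = (g_{i;j}, 0)`: its first `n` entries form the `g`-vector
of the `n`-dimensional `G`-pattern and its last `n` entries vanish. -/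
theorem stmt_4 (n K : ℕ) (hn : 1 ≤ n)
    (r : Fin n → ℤ) (hr : ∀ i, 0 < r i)
    (B₀ : Matrix (Fin n) (Fin n) ℤ)
    (idx : ℕ → Fin n) (ε : ℕ → ℤ)
    (hε : ∀ j < K, ε (j + 1) = 1 ∨ ε (j + 1) = -1)
    (Bt : ℕ → Matrix (Fin (n + n)) (Fin n) ℤ)
    (C : ℕ → Matrix (Fin n) (Fin n) ℤ)
    (Gt : ℕ → Matrix (Fin (n + n)) (Fin (n + n)) ℤ)
    (G : ℕ → Matrix (Fin n) (Fin n) ℤ)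
    (hBt0top : ∀ (i j : Fin n), Bt 0 (Fin.castAdd n i) j = B₀ i j)
    (hBt0bot : ∀ (i j : Fin n), Bt 0 (Fin.natAdd n i) j = if i = j then 1 else 0)
    (hC0 : C 0 = 1) (hGt0 : Gt 0 = 1) (hG0 : G 0 = 1)
    -- at each step the c-vector is nonzero and sign-coherent with common sign ε_j
    (hcv : ∀ j < K, (∃ l, C j l (idx (j + 1)) ≠ 0) ∧
      ∀ l, 0 ≤ ε (j + 1) * C j l (idx (j + 1)))
    (hBt : ∀ j < K, ∀ (a : Fin (n + n)) (b : Fin n),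
      Bt (j + 1) a b =
        if a = Fin.castAdd n (idx (j + 1)) ∨ b = idx (j + 1) then -(Bt j a b)
        else Bt j a b + r (idx (j + 1)) *
          (max (-(ε (j + 1) * Bt j a (idx (j + 1)))) 0 * Bt j (Fin.castAdd n (idx (j + 1))) b
            + Bt j a (idx (j + 1)) * max (ε (j + 1) * Bt j (Fin.castAdd n (idx (j + 1))) b) 0))
    (hC : ∀ j < K, ∀ (a b : Fin n),
      C (j + 1) a b =
        if b = idx (j + 1) then -(C j a b)
        else C j a b + r (idx (j + 1)) *
          (C j a (idx (j + 1)) * max (ε (j + 1) * Bt j (Fin.castAdd n (idx (j + 1))) b) 0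
            + max (-(ε (j + 1) * C j a (idx (j + 1)))) 0 * Bt j (Fin.castAdd n (idx (j + 1))) b))
    (hGt : ∀ j < K, ∀ (l i : Fin (n + n)),
      Gt (j + 1) l i =
        if i = Fin.castAdd n (idx (j + 1)) then
          -(Gt j l i) + r (idx (j + 1)) *
            ((∑ p : Fin (n + n), max (-(ε (j + 1) * Bt j p (idx (j + 1)))) 0 * Gt j l p)
              - ∑ p : Fin n, max (-(ε (j + 1) * C j p (idx (j + 1)))) 0 * Bt 0 l p)
        else Gt j l i)
    (hG : ∀ j < K, ∀ (l i : Fin n),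
      G (j + 1) l i =
        if i = idx (j + 1) then
          -(G j l i) + r (idx (j + 1)) *
            ((∑ p : Fin n,
                max (-(ε (j + 1) * Bt j (Fin.castAdd n p) (idx (j + 1)))) 0 * G j l p)
              - ∑ p : Fin n, max (-(ε (j + 1) * C j p (idx (j + 1)))) 0 * B₀ l p)
        else G j l i) :
    ∀ j ≤ K, ∀ (i l : Fin n),
      Gt j (Fin.castAdd n l) (Fin.castAdd n i) = G j l i ∧
      Gt j (Fin.natAdd n l) (Fin.castAdd n i) = 0 := by

  have hcast : ∀ p q : Fin n, Fin.castAdd n p = Fin.castAdd n q ↔ p = q := by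
    intro p q; rw [Fin.ext_iff, Fin.ext_iff]; simp
  have hnat : ∀ p q : Fin n, Fin.natAdd n p = Fin.natAdd n q ↔ p = q := by
    intro p q; rw [Fin.ext_iff, Fin.ext_iff]; simp
  have hcn : ∀ p q : Fin n, Fin.castAdd n p ≠ Fin.natAdd n q := by
    intro p q h; rw [Fin.ext_iff] at h; simp at h; omega
  have hnc : ∀ p q : Fin n, Fin.natAdd n p ≠ Fin.castAdd n q := by
    intro p q h; rw [Fin.ext_iff] at h; simp at h; omega
  suffices h : ∀ j ≤ K,
      (∀ a b : Fin n, Bt j (Fin.natAdd n a) b = C j a b) ∧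
      (∀ (l : Fin (n + n)) (i : Fin n),
        Gt j l (Fin.natAdd n i) = if l = Fin.natAdd n i then 1 else 0) ∧
      (∀ i l : Fin n, Gt j (Fin.castAdd n l) (Fin.castAdd n i) = G j l i ∧
        Gt j (Fin.natAdd n l) (Fin.castAdd n i) = 0) by
    intro j hj i l
    exact (h j hj).2.2 i l
  intro j
  induction j with
  | zero =>
    intro _
    refine ⟨?_, ?_, ?_⟩
    · intro a b; rw [hBt0bot, hC0, Matrix.one_apply]
    · intro l i; rw [hGt0, Matrix.one_apply]
    · intro i l
      rw [hGt0, hG0]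
      constructor
      · simp only [Matrix.one_apply, hcast]
      · rw [Matrix.one_apply, if_neg (hnc l i)]
  | succ j ih =>
    intro hj1
    have hjK : j < K := hj1
    obtain ⟨ihB, ihGtid, ihG⟩ := ih (le_of_lt hjK)
    set k := idx (j + 1) with hk
    refine ⟨?_, ?_, ?_⟩
    · -- bottom block of Bt equals C
      intro a b
      rw [hBt j hjK, hC j hjK]
      have : ¬ (Fin.natAdd n a = Fin.castAdd n k) := hnc a k
      by_cases hb : b = k
      · rw [if_pos (Or.inr hb), if_pos hb, ihB]
      · simp only [this, hb, false_or, if_false, ihB, ← hk]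
        ring
    · -- identity columns of Gt are unchanged
      intro l i
      rw [hGt j hjK, if_neg (hnc i k), ihGtid]
    · intro i l
      constructor
      · -- top block
        rw [hGt j hjK, hG j hjK]
        by_cases hik : i = k
        · rw [if_pos (by rw [hcast]; exact hik), if_pos hik, hik,
            (ihG k l).1, Fin.sum_univ_add]
          have h1 : ∀ p : Fin n,
              max (-(ε (j + 1) * Bt j (Fin.castAdd n p) k)) 0 *
                Gt j (Fin.castAdd n l) (Fin.castAdd n p)
              = max (-(ε (j + 1) * Bt j (Fin.castAdd n p) k)) 0 * G j l p := by
            intro p; rw [(ihG p l).1]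
          have h2 : ∀ p : Fin n,
              max (-(ε (j + 1) * Bt j (Fin.natAdd n p) k)) 0 *
                Gt j (Fin.castAdd n l) (Fin.natAdd n p) = 0 := by
            intro p; rw [ihGtid, if_neg (hcn l p), mul_zero]
          have h3 : ∀ p : Fin n,
              max (-(ε (j + 1) * C j p k)) 0 * Bt 0 (Fin.castAdd n l) p
              = max (-(ε (j + 1) * C j p k)) 0 * B₀ l p := by
            intro p; rw [hBt0top]
          rw [Finset.sum_congr rfl (fun p _ => h1 p),
            Finset.sum_congr rfl (fun p _ => h2 p),
            Finset.sum_congr rfl (fun p _ => h3 p)]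
          simp [← hk]
        · rw [if_neg (by rw [hcast]; exact hik), if_neg hik, (ihG i l).1]
      · -- bottom block
        rw [hGt j hjK]
        by_cases hik : i = k
        · rw [if_pos (by rw [hcast]; exact hik), hik,
            (ihG k l).2, Fin.sum_univ_add]
          have h1 : ∀ p : Fin n,
              max (-(ε (j + 1) * Bt j (Fin.castAdd n p) k)) 0 *
                Gt j (Fin.natAdd n l) (Fin.castAdd n p) = 0 := by
            intro p; rw [(ihG p l).2, mul_zero]
          have h2 : ∀ p : Fin n,
              max (-(ε (j + 1) * Bt j (Fin.natAdd n p) k)) 0 *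
                Gt j (Fin.natAdd n l) (Fin.natAdd n p)
              = max (-(ε (j + 1) * C j p k)) 0 * (if l = p then 1 else 0) := by
            intro p; rw [ihB, ihGtid]; simp only [hnat]
          have h3 : ∀ p : Fin n,
              max (-(ε (j + 1) * C j p k)) 0 * Bt 0 (Fin.natAdd n l) p
              = max (-(ε (j + 1) * C j p k)) 0 * (if l = p then 1 else 0) := by
            intro p; rw [hBt0bot]
          rw [Finset.sum_congr rfl (fun p _ => h1 p),
            Finset.sum_congr rfl (fun p _ => h2 p),
            Finset.sum_congr rfl (fun p _ => h3 p)]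
          simp
        · rw [if_neg (by rw [hcast]; exact hik), (ihG i l).2]
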